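/- Let (X_n)_{n∈ℕ} be random variables with values in [0,1]^d such that for every multi-index w ∈ ℕ^d the moments E[X_{n,1}^{w_1}⋯X_{n,d}^{w_d}] converge as n → ∞. Then (X_n) converges in distribution to a random variable X with values in [0,1]^d whose moments are the limits of the moments of X_n. -/

import Mathlib

open MeasureTheory Filter Topology Finset

section Stmt13Aux

open BoundedContinuousFunction NNReal ENNReal Set


variable {X : Type*} [MetricSpace X] [CompactSpace X] [MeasurableSpace X] [BorelSpace X]

noncomputable def toRBCF (f : X →ᵇ ℝ≥0) : X →ᵇ ℝ :=
  BoundedContinuousFunction.mkOfCompact ⟨fun x => (f x : ℝ), NNReal.continuous_coe.comp f.continuous⟩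

@[simp] lemma toRBCF_apply (f : X →ᵇ ℝ≥0) (x : X) : toRBCF f x = (f x : ℝ) := rfl

theorem exists_weak_limit (μ : ℕ → Measure X) [∀ n, IsProbabilityMeasure (μ n)]
    (h : ∀ f : X →ᵇ ℝ, ∃ L : ℝ, Tendsto (fun n => ∫ x, f x ∂ μ n) atTop (𝓝 L)) :
    ∃ ν : Measure X, IsProbabilityMeasure ν ∧
      ∀ f : X →ᵇ ℝ, Tendsto (fun n => ∫ x, f x ∂ μ n) atTop (𝓝 (∫ x, f x ∂ ν)) := by
  classical
  choose L hL using h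
  have hLadd : ∀ f g : X →ᵇ ℝ, L (f + g) = L f + L g := by
    intro f g
    refine tendsto_nhds_unique (hL (f + g)) ?_
    have : (fun n => ∫ x, (f + g) x ∂ μ n)
        = fun n => (∫ x, f x ∂ μ n) + ∫ x, g x ∂ μ n := by
      funext n
      simp only [BoundedContinuousFunction.coe_add, Pi.add_apply]
      exact integral_add (f.integrable _) (g.integrable _)
    rw [this]
    exact (hL f).add (hL g)
  have hLnonneg : ∀ f : X →ᵇ ℝ, 0 ≤ f → 0 ≤ L f := by
    intro f hf
    refine ge_of_tendsto (hL f) (Eventually.of_forall fun n => ?_)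
    exact integral_nonneg fun x => hf x
  have hLone : L 1 = 1 := by
    refine tendsto_nhds_unique (hL 1) ?_
    have : (fun n => ∫ x, (1 : X →ᵇ ℝ) x ∂ μ n) = fun _ => (1 : ℝ) := by
      funext n; simp
    rw [this]; exact tendsto_const_nhds
  have hLsmul : ∀ (c : ℝ≥0) (f : X →ᵇ ℝ), L ((c : ℝ) • f) = (c : ℝ) * L f := by
    intro c f
    refine tendsto_nhds_unique (hL _) ?_
    have : (fun n => ∫ x, ((c : ℝ) • f) x ∂ μ n) = fun n => (c : ℝ) * ∫ x, f x ∂ μ n := by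
      funext n
      simp only [BoundedContinuousFunction.coe_smul, Pi.smul_apply, smul_eq_mul]
      rw [integral_const_mul]
    rw [this]
    exact (hL f).const_mul _
  have h0 : ∀ f : X →ᵇ ℝ≥0, 0 ≤ toRBCF f := fun f x => (f x).coe_nonneg
  -- the NNReal-linear functional
  set Λ : (X →ᵇ ℝ≥0) →ₗ[ℝ≥0] ℝ≥0 :=
    { toFun := fun f => Real.toNNReal (L (toRBCF f))
      map_add' := by
        intro f g
        have : toRBCF (f + g) = toRBCF f + toRBCF g := by
          ext x; simp
        show (L (toRBCF (f+g))).toNNReal = (L (toRBCF f)).toNNReal + (L (toRBCF g)).toNNReal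
        rw [this, hLadd]
        exact Real.toNNReal_add (hLnonneg _ (h0 f)) (hLnonneg _ (h0 g))
      map_smul' := by
        intro c f
        have : toRBCF (c • f) = (c : ℝ) • toRBCF f := by
          ext x; simp [NNReal.smul_def]
        show (L (toRBCF (c • f))).toNNReal = c • (L (toRBCF f)).toNNReal
        rw [this, hLsmul]
        rw [Real.toNNReal_mul c.coe_nonneg, Real.toNNReal_coe]
        rfl } with hΛ
  have hΛeval : ∀ f : X →ᵇ ℝ≥0, (Λ f : ℝ) = L (toRBCF f) := by
    intro f
    simp only [hΛ, LinearMap.coe_mk, AddHom.coe_mk]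
    exact Real.coe_toNNReal _ (hLnonneg _ (h0 f))
  set Λc : CompactlySupportedContinuousMap X ℝ≥0 →ₗ[ℝ≥0] ℝ≥0 :=
    { toFun := fun f => Λ (BoundedContinuousFunction.mkOfCompact f.toContinuousMap)
      map_add' := fun f g => by rw [← map_add]; congr 1
      map_smul' := fun c f => by rw [← map_smul]; congr 1 } with hΛc
  -- Urysohn-based disjoint additivity
  have hcontent_disj : ∀ K₁ K₂ : TopologicalSpace.Compacts X, Disjoint (K₁ : Set X) K₂ →
      rieszContentAux Λc (K₁ ⊔ K₂) = rieszContentAux Λc K₁ + rieszContentAux Λc K₂ := by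
    intro K₁ K₂ hdisj
    refine le_antisymm (rieszContentAux_sup_le Λc K₁ K₂) ?_
    refine le_csInf (rieszContentAux_image_nonempty Λc _) ?_
    rintro b ⟨fc, hf, rfl⟩
    set f : X →ᵇ ℝ≥0 := BoundedContinuousFunction.mkOfCompact fc.toContinuousMap with hfdef
    show rieszContentAux Λc K₁ + rieszContentAux Λc K₂ ≤ Λ f
    obtain ⟨g, hg0, hg1, hg01⟩ := exists_continuous_zero_one_of_isClosed
      K₂.isCompact.isClosed K₁.isCompact.isClosed hdisj.symm
    set g₁ : X →ᵇ ℝ≥0 := BoundedContinuousFunction.mkOfCompact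
      ⟨fun x => f x * Real.toNNReal (g x),
        f.continuous.mul (continuous_real_toNNReal.comp g.continuous)⟩ with hg₁def
    set g₂ : X →ᵇ ℝ≥0 := BoundedContinuousFunction.mkOfCompact
      ⟨fun x => f x * Real.toNNReal (1 - g x),
        f.continuous.mul (continuous_real_toNNReal.comp (continuous_const.sub g.continuous))⟩ with hg₂def
    have hsum : f = g₁ + g₂ := by
      ext x
      have h1 := (hg01 x).1
      have h2 := (hg01 x).2
      have hre : ((g₁ + g₂) x : ℝ≥0) = f x * Real.toNNReal (g x) + f x * Real.toNNReal (1 - g x) := rfl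
      show ((f x : ℝ≥0) : ℝ) = (((g₁ + g₂) x : ℝ≥0) : ℝ)
      rw [hre]
      push_cast [Real.coe_toNNReal _ h1, Real.coe_toNNReal _ (by linarith : (0:ℝ) ≤ 1 - g x)]
      ring
    have hΛsplit : Λ f = Λ g₁ + Λ g₂ := by rw [hsum, map_add]
    have h₁ : rieszContentAux Λc K₁ ≤ Λ g₁ := by
      apply rieszContentAux_le (f := CompactlySupportedContinuousMap.continuousMapEquiv g₁.toContinuousMap)
      intro x hx
      show (1 : ℝ≥0) ≤ f x * Real.toNNReal (g x)
      have : g x = 1 := hg1 hx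
      rw [this]
      rw [Real.toNNReal_one, mul_one]; exact hf x (Or.inl hx)
    have h₂ : rieszContentAux Λc K₂ ≤ Λ g₂ := by
      apply rieszContentAux_le (f := CompactlySupportedContinuousMap.continuousMapEquiv g₂.toContinuousMap)
      intro x hx
      show (1 : ℝ≥0) ≤ f x * Real.toNNReal (1 - g x)
      have : g x = 0 := hg0 hx
      rw [this]
      rw [sub_zero, Real.toNNReal_one, mul_one]; exact hf x (Or.inr hx)
    calc rieszContentAux Λc K₁ + rieszContentAux Λc K₂ ≤ Λ g₁ + Λ g₂ := add_le_add h₁ h₂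
      _ = Λ f := hΛsplit.symm
  -- build the content
  set 𝒞 : MeasureTheory.Content X :=
    { toFun := rieszContentAux Λc
      mono' := fun K₁ K₂ hsub => rieszContentAux_mono Λc hsub
      sup_disjoint' := fun K₁ K₂ hdisj _ _ => hcontent_disj K₁ K₂ hdisj
      sup_le' := rieszContentAux_sup_le Λc } with h𝒞
  set ν : Measure X := 𝒞.measure with hν
  -- total mass one
  have hΛone : Λ 1 = 1 := by
    have : toRBCF (1 : X →ᵇ ℝ≥0) = 1 := by ext x; simp
    show Real.toNNReal (L (toRBCF 1)) = 1
    rw [this, hLone]; simp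
  have hcontent_univ : rieszContentAux Λc ⟨univ, isCompact_univ⟩ = 1 := by
    refine le_antisymm ?_ ?_
    · have := rieszContentAux_le Λc (K := ⟨univ, isCompact_univ⟩) (f := CompactlySupportedContinuousMap.continuousMapEquiv 1)
        (fun x _ => le_refl _)
      exact this.trans_eq hΛone
    · refine le_csInf (rieszContentAux_image_nonempty Λc _) ?_
      rintro b ⟨fc, hf, rfl⟩
      set f : X →ᵇ ℝ≥0 := BoundedContinuousFunction.mkOfCompact fc.toContinuousMap with hfdef
      have : (1 : ℝ) ≤ L (toRBCF f) := by
        refine ge_of_tendsto (hL _) (Eventually.of_forall fun n => ?_)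
        have : ∫ x, (1 : ℝ) ∂ μ n ≤ ∫ x, toRBCF f x ∂ μ n := by
          refine integral_mono (integrable_const 1) ((toRBCF f).integrable _) fun x => ?_
          have := hf x (mem_univ x)
          exact_mod_cast this
        simpa using this
      show (1 : ℝ≥0) ≤ Real.toNNReal (L (toRBCF f))
      rw [show (1 : ℝ≥0) = Real.toNNReal 1 by simp]
      exact Real.toNNReal_mono this
  have hνuniv : ν univ = 1 := by
    rw [hν, 𝒞.measure_apply MeasurableSet.univ,
      𝒞.outerMeasure_of_isOpen univ isOpen_univ,
      𝒞.innerContent_of_isCompact isCompact_univ isOpen_univ]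
    rw [h𝒞]
    show ((rieszContentAux Λc ⟨univ, isCompact_univ⟩ : ℝ≥0) : ℝ≥0∞) = 1
    rw [hcontent_univ]; simp
  have hνprob : IsProbabilityMeasure ν := ⟨hνuniv⟩
  -- the open set liminf inequality
  have h_opens : ∀ G : Set X, IsOpen G → ν G ≤ atTop.liminf (fun n => μ n G) := by
    intro G hG
    rw [hν, 𝒞.measure_apply hG.measurableSet, 𝒞.outerMeasure_of_isOpen G hG]
    refine iSup₂_le fun C hC => ?_
    obtain ⟨g, hg0, hg1, hg01⟩ := exists_continuous_zero_one_of_isClosed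
      (isClosed_compl_iff.mpr hG) C.isCompact.isClosed
      (disjoint_compl_left_iff_subset.mpr hC)
    set gnn : X →ᵇ ℝ≥0 := BoundedContinuousFunction.mkOfCompact
      ⟨fun x => Real.toNNReal (g x), continuous_real_toNNReal.comp g.continuous⟩ with hgnn
    have step1 : 𝒞 C ≤ ((Λ gnn : ℝ≥0) : ℝ≥0∞) := by
      refine ENNReal.coe_le_coe.mpr ?_
      refine rieszContentAux_le Λc (f := CompactlySupportedContinuousMap.continuousMapEquiv gnn.toContinuousMap) fun x hx => ?_
      show (1 : ℝ≥0) ≤ Real.toNNReal (g x)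
      rw [hg1 hx]; simp
    have hΛreal : ((Λ gnn : ℝ≥0) : ℝ≥0∞) = ENNReal.ofReal (L (toRBCF gnn)) := rfl
    have hpt : ∀ n, ENNReal.ofReal (∫ x, toRBCF gnn x ∂ μ n) ≤ μ n G := by
      intro n
      have hmono : ∫ x, toRBCF gnn x ∂ μ n ≤ ∫ x, G.indicator (fun _ => (1:ℝ)) x ∂ μ n := by
        refine integral_mono ((toRBCF gnn).integrable _) ?_ fun x => ?_
        · exact (integrable_indicator_iff hG.measurableSet).mpr
            (integrableOn_const (measure_ne_top _ _))
        · by_cases hx : x ∈ G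
          · have : toRBCF gnn x ≤ 1 := by
              show (Real.toNNReal (g x) : ℝ) ≤ 1
              rw [Real.coe_toNNReal _ (hg01 x).1]
              exact (hg01 x).2
            simpa [indicator_of_mem hx] using this
          · have : g x = 0 := hg0 hx
            show (Real.toNNReal (g x) : ℝ) ≤ _
            simp [this, indicator_of_notMem hx]
      have hind : ∫ x, G.indicator (fun _ => (1:ℝ)) x ∂ μ n = (μ n G).toReal := by
        rw [integral_indicator_const (1:ℝ) hG.measurableSet]; simp; rfl
      calc ENNReal.ofReal (∫ x, toRBCF gnn x ∂ μ n)
          ≤ ENNReal.ofReal ((μ n G).toReal) := ENNReal.ofReal_le_ofReal (hind ▸ hmono)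
        _ = μ n G := ENNReal.ofReal_toReal (measure_ne_top _ _)
    have hlim : Tendsto (fun n => ENNReal.ofReal (∫ x, toRBCF gnn x ∂ μ n)) atTop
        (𝓝 (ENNReal.ofReal (L (toRBCF gnn)))) :=
      (ENNReal.continuous_ofReal.tendsto _).comp (hL _)
    calc (𝒞 C : ℝ≥0∞) ≤ ENNReal.ofReal (L (toRBCF gnn)) := hΛreal ▸ step1
      _ = atTop.liminf (fun n => ENNReal.ofReal (∫ x, toRBCF gnn x ∂ μ n)) := hlim.liminf_eq.symm
      _ ≤ atTop.liminf (fun n => μ n G) := liminf_le_liminf (Eventually.of_forall hpt)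
  refine ⟨ν, hνprob, ?_⟩
  intro f
  have key := BoundedContinuousFunction.tendsto_integral_of_forall_integral_le_liminf_integral
    (μ := ν) (μs := μ) (L := atTop) ?_ f
  · exact key
  · intro f f_nn
    exact integral_le_liminf_integral_of_forall_isOpen_measure_le_liminf_measure f_nn h_opens

end Stmt13Aux

open BoundedContinuousFunction NNReal ENNReal Set in
theorem stmt13 (d : ℕ) (μ : ℕ → Measure (Fin d → ℝ)) [∀ n, IsProbabilityMeasure (μ n)]
    (hsupp : ∀ n, μ n {x | ∀ j, x j ∈ Set.Icc (0 : ℝ) 1} = 1)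
    (hmom : ∀ w : Fin d → ℕ, ∃ L : ℝ,
      Tendsto (fun n => ∫ x, ∏ j, (x j) ^ (w j) ∂ μ n) atTop (𝓝 L)) :
    ∃ ν : Measure (Fin d → ℝ), IsProbabilityMeasure ν ∧
      ν {x | ∀ j, x j ∈ Set.Icc (0 : ℝ) 1} = 1 ∧
      -- moments of the limit are the limits of the moments
      (∀ w : Fin d → ℕ,
        Tendsto (fun n => ∫ x, ∏ j, (x j) ^ (w j) ∂ μ n) atTop
          (𝓝 (∫ x, ∏ j, (x j) ^ (w j) ∂ ν))) ∧
      -- convergence in distribution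
      (∀ f : BoundedContinuousFunction (Fin d → ℝ) ℝ,
        Tendsto (fun n => ∫ x, f x ∂ μ n) atTop (𝓝 (∫ x, f x ∂ ν))) := by
  classical
  set K : Set (Fin d → ℝ) := {x | ∀ j, x j ∈ Set.Icc (0:ℝ) 1} with hKdef
  have hKpi : K = Set.pi Set.univ (fun _ : Fin d => Set.Icc (0:ℝ) 1) := by
    ext x; simp [hKdef, Set.mem_pi, Set.mem_Icc, Pi.le_def, forall_and]
  have hKcomp : IsCompact K := by
    rw [hKpi]; exact isCompact_univ_pi (fun _ => isCompact_Icc)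
  have hKclosed : IsClosed K := hKcomp.isClosed
  haveI : CompactSpace K := isCompact_iff_compactSpace.mp hKcomp
  have hKmeas : MeasurableSet K := hKclosed.measurableSet
  have he : MeasurableEmbedding ((↑) : K → (Fin d → ℝ)) := MeasurableEmbedding.subtype_coe hKmeas
  have hcompl : ∀ n, μ n Kᶜ = 0 := by
    intro n
    have h1 : μ n K = 1 := hsupp n
    rw [measure_compl hKmeas (measure_ne_top _ _), h1, measure_univ, tsub_self]
  have haeK : ∀ n, ∀ᵐ x ∂ μ n, x ∈ K := fun n => by
    rw [ae_iff]
    exact hcompl n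
  set μK : ℕ → Measure K := fun n => (μ n).comap (↑) with hμKdef
  have hmap : ∀ n, (μK n).map ((↑) : K → (Fin d → ℝ)) = μ n := by
    intro n
    rw [hμKdef]
    simp only
    rw [map_comap_subtype_coe hKmeas]
    exact Measure.restrict_eq_self_of_ae_mem (haeK n)
  haveI hprobK : ∀ n, IsProbabilityMeasure (μK n) := by
    intro n
    constructor
    rw [hμKdef]
    simp only
    rw [he.comap_apply, Subtype.coe_image_univ]
    exact hsupp n
  have hint : ∀ (n : ℕ) (g : (Fin d → ℝ) → ℝ),
      ∫ x, g x ∂ μ n = ∫ y : K, g (y : Fin d → ℝ) ∂ μK n := by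
    intro n g
    rw [← hmap n, he.integral_map]
  -- coordinate functions
  set coords : Fin d → C(K, ℝ) :=
    fun j => ⟨fun y => (y : Fin d → ℝ) j, (continuous_apply j).comp continuous_subtype_val⟩
    with hcoords
  set A : Subalgebra ℝ C(K, ℝ) := Algebra.adjoin ℝ (Set.range coords) with hA
  have hsep : A.SeparatesPoints := by
    intro x y hxy
    have hj : ∃ j, (x : Fin d → ℝ) j ≠ (y : Fin d → ℝ) j := by
      by_contra hcon
      push_neg at hcon
      exact hxy (Subtype.ext (funext hcon))
    obtain ⟨j, hj⟩ := hj
    exact ⟨coords j, ⟨coords j, Algebra.subset_adjoin (Set.mem_range_self j), rfl⟩, hj⟩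
  have hdense : A.topologicalClosure = ⊤ :=
    ContinuousMap.subalgebra_topologicalClosure_eq_top_of_separatesPoints A hsep
  have hintCM : ∀ (f : C(K, ℝ)) (n : ℕ), Integrable f (μK n) := by
    intro f n
    have := (BoundedContinuousFunction.mkOfCompact f).integrable (μ := μK n)
    exact this
  set S : Set C(K, ℝ) :=
    {f | ∃ l : ℝ, Tendsto (fun n => ∫ y, f y ∂ μK n) atTop (𝓝 l)} with hS
  have hmonoS : ∀ w : Fin d → ℕ, (∏ j, coords j ^ w j) ∈ S := by
    intro w
    obtain ⟨l, hl⟩ := hmom w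
    refine ⟨l, ?_⟩
    have heval : ∀ y : K, (∏ j, coords j ^ w j) y = ∏ j, ((y : Fin d → ℝ) j) ^ (w j) := by
      intro y
      simp [hcoords]
    have : (fun n => ∫ y, (∏ j, coords j ^ w j) y ∂ μK n)
        = fun n => ∫ x, ∏ j, (x j) ^ (w j) ∂ μ n := by
      funext n
      rw [hint n (fun x => ∏ j, (x j) ^ (w j))]
      exact integral_congr_ae (Eventually.of_forall fun y => heval y)
    rw [this]
    exact hl
  have hshape : ∀ g ∈ Submonoid.closure (Set.range coords),
      ∃ w : Fin d → ℕ, g = ∏ j, coords j ^ w j := by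
    intro g hg
    induction hg using Submonoid.closure_induction with
    | mem x hx =>
      obtain ⟨j, rfl⟩ := hx
      refine ⟨Pi.single j 1, ?_⟩
      rw [Finset.prod_eq_single j (fun i _ hij => by simp [Pi.single_eq_of_ne hij])
        (by simp)]
      simp
    | one => exact ⟨0, by simp⟩
    | mul x y hx hy ihx ihy =>
      obtain ⟨w₁, rfl⟩ := ihx
      obtain ⟨w₂, rfl⟩ := ihy
      exact ⟨w₁ + w₂, by rw [← Finset.prod_mul_distrib]; simp [pow_add]⟩
  have hAS : (A : Set C(K, ℝ)) ⊆ S := by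
    intro f hf
    have hf' : f ∈ Submodule.span ℝ ((Submonoid.closure (Set.range coords) : Submonoid C(K, ℝ)) : Set C(K, ℝ)) := by
      have := Algebra.adjoin_eq_span ℝ (Set.range coords)
      rw [hA] at hf
      have hf2 : f ∈ Subalgebra.toSubmodule (Algebra.adjoin ℝ (Set.range coords)) := hf
      rwa [this] at hf2
    clear hf
    induction hf' using Submodule.span_induction with
    | mem g hg =>
      obtain ⟨w, rfl⟩ := hshape g hg
      exact hmonoS w
    | zero =>
      exact ⟨0, by simpa using tendsto_const_nhds⟩
    | add g₁ g₂ hg₁ hg₂ ih₁ ih₂ =>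
      obtain ⟨l₁, h₁⟩ := ih₁
      obtain ⟨l₂, h₂⟩ := ih₂
      refine ⟨l₁ + l₂, ?_⟩
      have : (fun n => ∫ y, (g₁ + g₂) y ∂ μK n)
          = fun n => (∫ y, g₁ y ∂ μK n) + ∫ y, g₂ y ∂ μK n := by
        funext n
        simp only [ContinuousMap.add_apply]
        exact integral_add (hintCM g₁ n) (hintCM g₂ n)
      rw [this]
      exact h₁.add h₂
    | smul r g hg ih =>
      obtain ⟨l, hml⟩ := ih
      refine ⟨r * l, ?_⟩
      have : (fun n => ∫ y, (r • g) y ∂ μK n) = fun n => r * ∫ y, g y ∂ μK n := by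
        funext n
        simp only [ContinuousMap.smul_apply, smul_eq_mul]
        rw [integral_const_mul]
      rw [this]
      exact hml.const_mul r
  have hall : ∀ f : C(K, ℝ), f ∈ S := by
    intro f
    have hfc : f ∈ closure (A : Set C(K, ℝ)) := by
      have : f ∈ (A.topologicalClosure : Set C(K, ℝ)) := by
        rw [hdense]; trivial
      rwa [Subalgebra.topologicalClosure_coe] at this
    have hcauchy : CauchySeq (fun n => ∫ y, f y ∂ μK n) := by
      rw [Metric.cauchySeq_iff]
      intro ε hε
      obtain ⟨g, hgA, hgd⟩ : ∃ g ∈ (A : Set C(K, ℝ)), dist f g < ε / 4 := by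
        rw [Metric.mem_closure_iff] at hfc
        obtain ⟨g, hgA, hgd⟩ := hfc (ε / 4) (by linarith)
        exact ⟨g, hgA, hgd⟩
      obtain ⟨l, hgl⟩ := hAS hgA
      have hgc : CauchySeq (fun n => ∫ y, g y ∂ μK n) := hgl.cauchySeq
      rw [Metric.cauchySeq_iff] at hgc
      obtain ⟨N, hN⟩ := hgc (ε / 4) (by linarith)
      refine ⟨N, fun m hm n hn => ?_⟩
      have hbound : ∀ k, dist (∫ y, f y ∂ μK k) (∫ y, g y ∂ μK k) ≤ ε / 4 := by
        intro k
        rw [dist_eq_norm, ← integral_sub (hintCM f k) (hintCM g k)]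
        have hb : ‖∫ y, (f y - g y) ∂ μK k‖ ≤ dist f g * ((μK k) univ).toReal := by
          refine norm_integral_le_of_norm_le_const (Eventually.of_forall fun y => ?_)
          rw [← dist_eq_norm]
          exact ContinuousMap.dist_apply_le_dist y
        rw [measure_univ] at hb
        simp only [ENNReal.toReal_one, mul_one] at hb
        exact hb.trans hgd.le
      calc dist (∫ y, f y ∂ μK m) (∫ y, f y ∂ μK n)
          ≤ dist (∫ y, f y ∂ μK m) (∫ y, g y ∂ μK m)
            + dist (∫ y, g y ∂ μK m) (∫ y, g y ∂ μK n)
            + dist (∫ y, g y ∂ μK n) (∫ y, f y ∂ μK n) := dist_triangle4 _ _ _ _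
        _ < ε / 4 + ε / 4 + ε / 4 := by
            have := hbound m
            have := hbound n
            have := hN m hm n hn
            rw [dist_comm (∫ y, g y ∂ μK n)] at *
            linarith [hbound m, hbound n, hN m hm n hn]
        _ ≤ ε := by linarith
    exact cauchySeq_tendsto_of_complete hcauchy
  -- apply the compact-space weak limit theorem
  obtain ⟨ν', hν'prob, hν'⟩ := exists_weak_limit μK (fun fb => by
    obtain ⟨l, hl⟩ := hall fb.toContinuousMap
    exact ⟨l, hl⟩)
  have hweak : ∀ f : BoundedContinuousFunction (Fin d → ℝ) ℝ,
      Tendsto (fun n => ∫ x, f x ∂ μ n)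
        atTop (𝓝 (∫ x, f x ∂ (ν'.map ((↑) : K → (Fin d → ℝ))))) := by
    intro f
    have h2 : ∫ x, f x ∂ (ν'.map ((↑) : K → (Fin d → ℝ))) = ∫ y : K, f (y : Fin d → ℝ) ∂ ν' :=
      he.integral_map (g := fun x => f x)
    have hfK := hν' (f.compContinuous ⟨((↑) : K → (Fin d → ℝ)), continuous_subtype_val⟩)
    have h1 : (fun n => ∫ x, f x ∂ μ n) = fun n => ∫ y : K, f (y : Fin d → ℝ) ∂ μK n := by
      funext n; exact hint n f
    rw [h2, h1]
    simpa using hfK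
  refine ⟨ν'.map ((↑) : K → (Fin d → ℝ)), ?_, ?_, ?_, hweak⟩
  · exact Measure.isProbabilityMeasure_map measurable_subtype_coe.aemeasurable
  · rw [Measure.map_apply measurable_subtype_coe hKmeas, Subtype.coe_preimage_self]
    exact measure_univ
  · intro w
    have hcont : Continuous fun x : Fin d → ℝ => ∏ j, (min (max (x j) 0) 1) ^ (w j) := by
      apply continuous_finset_prod
      intro j _
      exact (((continuous_apply j).max continuous_const).min continuous_const).pow _
    have hmem : ∀ x : Fin d → ℝ, (∏ j, (min (max (x j) 0) 1) ^ (w j)) ∈ Set.Icc (0:ℝ) 1 := by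
      intro x
      constructor
      · exact Finset.prod_nonneg fun j _ => pow_nonneg (le_min (le_max_right _ _) zero_le_one) _
      · exact Finset.prod_le_one (fun j _ => pow_nonneg (le_min (le_max_right _ _) zero_le_one) _)
          (fun j _ => pow_le_one₀ (le_min (le_max_right _ _) zero_le_one) (min_le_right _ _))
    set F : BoundedContinuousFunction (Fin d → ℝ) ℝ :=
      ⟨⟨fun x => ∏ j, (min (max (x j) 0) 1) ^ (w j), hcont⟩, 1, fun x y => by
        have hx := hmem x; have hy := hmem y
        rw [Real.dist_eq, abs_sub_le_iff]
        exact ⟨by linarith [hx.1, hx.2, hy.1, hy.2], by linarith [hx.1, hx.2, hy.1, hy.2]⟩⟩ with hF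
    have hFK : ∀ x ∈ K, F x = ∏ j, (x j) ^ (w j) := by
      intro x hx
      show (∏ j, (min (max (x j) 0) 1) ^ (w j)) = _
      refine Finset.prod_congr rfl fun j _ => ?_
      rw [max_eq_left (hx j).1, min_eq_left (hx j).2]
    have heq1 : (fun n => ∫ x, ∏ j, (x j) ^ (w j) ∂ μ n) = fun n => ∫ x, F x ∂ μ n := by
      funext n
      refine integral_congr_ae ?_
      filter_upwards [haeK n] with x hx
      exact (hFK x hx).symm
    have hmapae : ∀ᵐ x ∂ (ν'.map ((↑) : K → (Fin d → ℝ))), x ∈ K := by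
      rw [ae_iff]
      have hpre : ((↑) : K → (Fin d → ℝ)) ⁻¹' {x | ¬ x ∈ K} = ∅ := by
        ext y; simp [y.2]
      rw [Measure.map_apply measurable_subtype_coe]
      · rw [hpre]; simp
      · exact hKmeas.compl
    have heq2 : ∫ x, ∏ j, (x j) ^ (w j) ∂ (ν'.map ((↑) : K → (Fin d → ℝ)))
        = ∫ x, F x ∂ (ν'.map ((↑) : K → (Fin d → ℝ))) := by
      refine integral_congr_ae ?_
      filter_upwards [hmapae] with x hx
      exact (hFK x hx).symm
    rw [heq1, heq2]
    exact hweak F
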